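/- arXiv:1306.5842 — 4 statements merged into one kernel-verified Lean document; each statement's English description precedes it below -/
import Mathlib

section
/- For d ≥ 5 and ξ a primitive (d²−3d+3)-rd root of unity, the transformations σ = [ξ^{-(d-2)}X, ξY, Z] and τ = [Y, Z, X] both preserve the polynomial XY^{d-1} + YZ^{d-1} + ZX^{d-1} up to a nonzero scalar, and the group they generate in PGL(3,ℂ) has order 3(d²−3d+3). -/
open MvPolynomial Matrix

/-- Action of a `3×3` matrix on polynomials by linear substitution of coordinates. -/
noncomputable def actOn (M : Matrix (Fin 3) (Fin 3) ℂ) (F : MvPolynomial (Fin 3) ℂ) :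
    MvPolynomial (Fin 3) ℂ :=
  MvPolynomial.bind₁ (fun i => ∑ j, MvPolynomial.C (M i j) * MvPolynomial.X j) F

/-- `PGL(3, ℂ)`. -/
abbrev PGL3 := GL (Fin 3) ℂ ⧸ Subgroup.center (GL (Fin 3) ℂ)

noncomputable def toPGL3 : GL (Fin 3) ℂ →* PGL3 := QuotientGroup.mk' _

lemma mem_center_GL3_iff (u : GL (Fin 3) ℂ) :
    u ∈ Subgroup.center (GL (Fin 3) ℂ) ↔
      ∃ c : ℂ, (u : Matrix (Fin 3) (Fin 3) ℂ) = c • 1 := by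
  rw [Subgroup.mem_center_iff]
  constructor
  · intro h
    have : (u : Matrix (Fin 3) (Fin 3) ℂ) ∈ Set.range (Matrix.scalar (Fin 3)) := by
      apply Matrix.mem_range_scalar_of_commute_transvectionStruct
      intro t
      have := h ⟨t.toMatrix, t.inv.toMatrix, t.mul_inv, t.inv_mul⟩
      have := congrArg (Units.val) this
      simpa [Commute, SemiconjBy] using this
    obtain ⟨c, hc⟩ := this
    exact ⟨c, by rw [← hc]; simp [Matrix.scalar_apply, Matrix.smul_one_eq_diagonal]⟩
  · rintro ⟨c, hc⟩ g
    ext1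
    simp only [Units.val_mul, hc, Matrix.mul_smul, Matrix.smul_mul, Matrix.mul_one,
      Matrix.one_mul]

/-- In a group, from `τ*σ = σ^e*τ` we get `τ^b * σ^a = σ^(a*e^b) * τ^b`. -/
lemma pow_comm_rel {G : Type*} [Group G] (σ τ : G) (e : ℕ) (h : τ * σ = σ ^ e * τ) :
    ∀ b a : ℕ, τ ^ b * σ ^ a = σ ^ (a * e ^ b) * τ ^ b := by
  have h1 : ∀ a : ℕ, τ * σ ^ a = σ ^ (a * e) * τ := by
    intro a
    induction a with
    | zero => simp
    | succ a ih =>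
      rw [pow_succ, ← mul_assoc, ih, mul_assoc, h, ← mul_assoc, ← pow_add]
      ring_nf
  intro b
  induction b with
  | zero => simp
  | succ b ih =>
    intro a
    rw [pow_succ, mul_assoc, h1, ← mul_assoc, ih, ← mul_assoc,
      show a * e * e ^ b = a * e ^ (b + 1) by ring]

set_option maxHeartbeats 2000000 in
/-- For `d ≥ 5` and `ξ` a primitive `(d²-3d+3)`-rd root of unity, the transformations
`σ = [ξ^{-(d-2)}X, ξY, Z]` and `τ = [Y, Z, X]` preserve the Klein polynomial
`XY^{d-1} + YZ^{d-1} + ZX^{d-1}` up to a nonzero scalar, and generate a subgroup of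
`PGL(3,ℂ)` of order `3(d²-3d+3)`. -/
theorem klein_group_order (d : ℕ) (hd : 5 ≤ d) (ξ : ℂ)
    (hξ : IsPrimitiveRoot ξ (d ^ 2 - 3 * d + 3))
    (s t : GL (Fin 3) ℂ)
    (hs : (s : Matrix (Fin 3) (Fin 3) ℂ) = !![ξ⁻¹ ^ (d - 2), 0, 0; 0, ξ, 0; 0, 0, 1])
    (ht : (t : Matrix (Fin 3) (Fin 3) ℂ) = !![0, 1, 0; 0, 0, 1; 1, 0, 0]) :
    (∀ M ∈ ({(s : Matrix (Fin 3) (Fin 3) ℂ), (t : Matrix (Fin 3) (Fin 3) ℂ)} :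
        Set (Matrix (Fin 3) (Fin 3) ℂ)),
      ∃ c : ℂ, c ≠ 0 ∧
        actOn M (X 0 * X 1 ^ (d - 1) + X 1 * X 2 ^ (d - 1) + X 2 * X 0 ^ (d - 1)) =
          MvPolynomial.C c *
            (X 0 * X 1 ^ (d - 1) + X 1 * X 2 ^ (d - 1) + X 2 * X 0 ^ (d - 1))) ∧
      Nat.card (Subgroup.closure {toPGL3 s, toPGL3 t} : Subgroup PGL3)
        = 3 * (d ^ 2 - 3 * d + 3) := by
  obtain ⟨e, rfl⟩ : ∃ e, d = e + 2 := ⟨d - 2, by omega⟩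
  have he : 3 ≤ e := by omega
  set n : ℕ := (e + 2) ^ 2 - 3 * (e + 2) + 3 with hn_def
  have hn : n = e ^ 2 + e + 1 := by rw [hn_def]; ring_nf; omega
  rw [hn] at hξ
  have hd1 : e + 2 - 1 = e + 1 := by omega
  have hd2 : e + 2 - 2 = e := by omega
  simp only [hd1, hd2] at hs ⊢
  have h1 : ξ ^ (e ^ 2 + e + 1) = 1 := hξ.pow_eq_one
  have hnpos : 0 < n := by omega
  haveI : NeZero n := ⟨by omega⟩
  have hξ0 : ξ ≠ 0 := by
    intro h; rw [h] at h1; simp at h1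
  -- key scalar identities
  have hA : (ξ ^ e)⁻¹ * ξ ^ (e + 1) = ξ := by
    field_simp
    ring
  have hB : ((ξ ^ e)⁻¹) ^ (e + 1) = ξ := by
    have h2 : ξ ^ (e * (e + 1)) * ξ = 1 := by
      rw [← pow_succ, ← h1]; ring_nf
    have h3 : ξ ^ (e * (e + 1)) = ξ⁻¹ := eq_inv_of_mul_eq_one_left h2
    rw [inv_pow, ← pow_mul, h3, inv_inv]
  have hC : ξ ^ (e + 1) = (ξ⁻¹ ^ e) ^ e := by
    have h2 : ξ ^ (e + 1) * ξ ^ (e * e) = 1 := by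
      rw [← pow_add, ← h1]; ring_nf
    rw [← pow_mul, inv_pow]
    exact eq_inv_of_mul_eq_one_left h2
  constructor
  · -- invariance part
    rintro M (rfl | rfl)
    · refine ⟨ξ, hξ0, ?_⟩
      rw [hs]
      simp only [actOn, map_add, _root_.map_mul, _root_.map_pow, bind₁_X_right,
        Fin.sum_univ_three]
      simp [Matrix.vecHead, Matrix.vecTail]
      rw [mul_pow, mul_pow, ← map_pow, ← map_pow]
      have e2 : (C (((ξ ^ e)⁻¹) ^ (e + 1)) : MvPolynomial (Fin 3) ℂ) = C ξ := by
        rw [hB]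
      have e1 : (C ((ξ ^ e)⁻¹) : MvPolynomial (Fin 3) ℂ) * C (ξ ^ (e + 1)) = C ξ := by
        rw [← _root_.map_mul, hA]
      rw [e2]
      linear_combination (X 0 * X 1 ^ (e + 1) : MvPolynomial (Fin 3) ℂ) * e1
    · refine ⟨1, one_ne_zero, ?_⟩
      rw [ht]
      simp only [actOn, map_add, _root_.map_mul, _root_.map_pow, bind₁_X_right,
        Fin.sum_univ_three]
      simp [Matrix.vecHead, Matrix.vecTail]
      ring
  · -- group order part
    set σ : PGL3 := toPGL3 s with hσ_def
    set τ : PGL3 := toPGL3 t with hτ_def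
    -- matrix facts
    have hspow : ∀ k : ℕ, ((s ^ k : GL (Fin 3) ℂ) : Matrix (Fin 3) (Fin 3) ℂ)
        = Matrix.diagonal ![(ξ⁻¹ ^ e) ^ k, ξ ^ k, 1] := by
      intro k
      have hsd : (s : Matrix (Fin 3) (Fin 3) ℂ) = Matrix.diagonal ![ξ⁻¹ ^ e, ξ, 1] := by
        rw [hs]; ext i j; fin_cases i <;> fin_cases j <;> simp [Matrix.diagonal, Matrix.vecHead, Matrix.vecTail]
      rw [Units.val_pow_eq_pow_val, hsd, Matrix.diagonal_pow]
      have hv : (![ξ⁻¹ ^ e, ξ, 1] : Fin 3 → ℂ) ^ k = ![(ξ⁻¹ ^ e) ^ k, ξ ^ k, 1] := by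
        funext i; fin_cases i <;> simp [Pi.pow_apply]
      rw [hv]
    have ht2 : ((t ^ 2 : GL (Fin 3) ℂ) : Matrix (Fin 3) (Fin 3) ℂ)
        = !![0, 0, 1; 1, 0, 0; 0, 1, 0] := by
      rw [Units.val_pow_eq_pow_val, ht, pow_two]
      ext i j; fin_cases i <;> fin_cases j <;> simp [Matrix.mul_apply, Fin.sum_univ_three, Matrix.vecHead, Matrix.vecTail]
    have hx : ξ ^ n = 1 := by rw [hn]; exact h1
    have hxi : (ξ⁻¹ ^ e) ^ n = 1 := by
      rw [inv_pow, inv_pow, ← pow_mul, mul_comm, pow_mul, hx, one_pow, inv_one]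
    have hsn : s ^ n = 1 := by
      ext1
      rw [hspow, hx, hxi, Units.val_one]
      ext i j
      fin_cases i <;> fin_cases j <;>
        simp [Matrix.diagonal, Matrix.one_apply, Matrix.vecHead, Matrix.vecTail]
    have ht3 : t ^ 3 = 1 := by
      ext1
      have : (t ^ 3 : GL (Fin 3) ℂ) = (t ^ 2) * t := by group
      rw [this, Units.val_mul, ht2, ht]
      ext i j; fin_cases i <;> fin_cases j <;> simp [Matrix.mul_apply, Fin.sum_univ_three, Matrix.vecHead, Matrix.vecTail]
    have hσn : σ ^ n = 1 := by rw [hσ_def, ← _root_.map_pow, hsn, _root_.map_one]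
    have hτ3 : τ ^ 3 = 1 := by rw [hτ_def, ← _root_.map_pow, ht3, _root_.map_one]
    -- the commutation relation
    have hτσ : τ * σ = σ ^ e * τ := by
      rw [hσ_def, hτ_def, ← _root_.map_mul, ← _root_.map_pow, ← _root_.map_mul]
      have hz1 : ((ξ ^ e) • (1 : Matrix (Fin 3) (Fin 3) ℂ)) * ((ξ⁻¹ ^ e) • 1) = 1 := by
        rw [Matrix.smul_mul, Matrix.mul_smul, smul_smul, Matrix.mul_one]
        rw [inv_pow, mul_inv_cancel₀ (pow_ne_zero _ hξ0), one_smul]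
      have hz2 : ((ξ⁻¹ ^ e) • (1 : Matrix (Fin 3) (Fin 3) ℂ)) * ((ξ ^ e) • 1) = 1 := by
        rw [Matrix.smul_mul, Matrix.mul_smul, smul_smul, Matrix.mul_one]
        rw [inv_pow, inv_mul_cancel₀ (pow_ne_zero _ hξ0), one_smul]
      refine (QuotientGroup.mk'_eq_mk' _).mpr
        ⟨⟨(ξ ^ e) • 1, (ξ⁻¹ ^ e) • 1, hz1, hz2⟩, (mem_center_GL3_iff _).mpr ⟨ξ ^ e, rfl⟩, ?_⟩
      ext1
      rw [Units.val_mul, Units.val_mul, Units.val_mul, hspow, hs, ht]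
      ext i j
      have key : ξ * ξ ^ e = (ξ⁻¹ ^ e) ^ e := by
        rw [inv_pow, inv_pow, ← pow_mul]
        have hme : ξ * ξ ^ e * ξ ^ (e * e) = 1 := by
          rw [← pow_succ', ← pow_add, ← h1]
          ring_nf
        field_simp
        linear_combination hme
      fin_cases i <;> fin_cases j <;>
        simp [Matrix.mul_apply, Fin.sum_univ_three, Matrix.diagonal, Matrix.vecHead,
          Matrix.vecTail, Matrix.one_apply, key, mul_comm,
          mul_inv_cancel₀ (pow_ne_zero e hξ0)]
    have hcomm := pow_comm_rel σ τ e hτσ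
    -- reduction of exponents
    have hσmod : ∀ m : ℕ, σ ^ m = σ ^ (m % n) := by
      intro m
      conv_lhs => rw [← Nat.div_add_mod m n]
      rw [pow_add, pow_mul, hσn, one_pow, one_mul]
    have hτmod : ∀ m : ℕ, τ ^ m = τ ^ (m % 3) := by
      intro m
      conv_lhs => rw [← Nat.div_add_mod m 3]
      rw [pow_add, pow_mul, hτ3, one_pow, one_mul]
    -- the key rigidity lemma
    have hL : ∀ a b : ℕ, b < 3 → σ ^ a * τ ^ b = 1 → n ∣ a ∧ b = 0 := by
      intro a b hb h
      have h' : toPGL3 (s ^ a * t ^ b) = 1 := by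
        rw [_root_.map_mul, _root_.map_pow, _root_.map_pow]; exact h
      have hmem : s ^ a * t ^ b ∈ Subgroup.center (GL (Fin 3) ℂ) :=
        (QuotientGroup.eq_one_iff _).mp h'
      obtain ⟨c, hc⟩ := (mem_center_GL3_iff _).mp hmem
      rw [Units.val_mul, hspow] at hc
      interval_cases b
      · refine ⟨?_, rfl⟩
        rw [hn]
        apply hξ.dvd_of_pow_eq_one
        have e22 := congrFun (congrFun hc 2) 2
        have e11 := congrFun (congrFun hc 1) 1
        simp [Matrix.diagonal, Matrix.mul_apply, Fin.sum_univ_three] at e22 e11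
        rw [e11, ← e22]
      · exfalso
        have e20 := congrFun (congrFun hc 2) 0
        rw [pow_one, ht] at e20
        simp [Matrix.diagonal, Matrix.mul_apply, Fin.sum_univ_three] at e20
      · exfalso
        have e21 := congrFun (congrFun hc 2) 1
        rw [ht2] at e21
        simp [Matrix.diagonal, Matrix.mul_apply, Fin.sum_univ_three] at e21
    -- the parametrization
    set A : ZMod n × ZMod 3 → PGL3 := fun p => σ ^ p.1.val * τ ^ p.2.val with hA_def
    have hrange : ∀ a b : ℕ, σ ^ a * τ ^ b ∈ Set.range A := by
      intro a b
      refine ⟨(↑a, ↑b), ?_⟩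
      simp only [hA_def]
      rw [ZMod.val_natCast, ZMod.val_natCast, ← hσmod, ← hτmod]
    set K : Subgroup PGL3 :=
      { carrier := Set.range A
        one_mem' := ⟨(0, 0), by simp [hA_def]⟩
        mul_mem' := by
          rintro x y ⟨p, rfl⟩ ⟨q, rfl⟩
          simp only [hA_def]
          have : σ ^ p.1.val * τ ^ p.2.val * (σ ^ q.1.val * τ ^ q.2.val)
              = σ ^ (p.1.val + q.1.val * e ^ p.2.val) * τ ^ (p.2.val + q.2.val) := by
            rw [pow_add, pow_add, mul_assoc, ← mul_assoc (τ ^ p.2.val), hcomm]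
            simp only [mul_assoc]
          rw [this]; exact hrange _ _
        inv_mem' := by
          rintro x ⟨p, rfl⟩
          simp only [hA_def]
          have hav : p.1.val < n := ZMod.val_lt _
          have hbv : p.2.val < 3 := ZMod.val_lt _
          have hone : σ ^ p.1.val * τ ^ p.2.val * (τ ^ (3 - p.2.val) * σ ^ (n - p.1.val))
              = 1 := by
            rw [mul_assoc, ← mul_assoc (τ ^ p.2.val), ← pow_add,
              show p.2.val + (3 - p.2.val) = 3 by omega, hτ3, one_mul, ← pow_add,
              show p.1.val + (n - p.1.val) = n by omega, hσn]
          rw [inv_eq_of_mul_eq_one_right hone, hcomm]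
          exact hrange _ _ } with hK_def
    have hclosure : Subgroup.closure {σ, τ} = K := by
      apply le_antisymm
      · rw [Subgroup.closure_le]
        rintro x (rfl | rfl)
        · have h := hrange 1 0
          rw [pow_one, pow_zero, mul_one] at h
          exact h
        · have h := hrange 0 1
          rw [pow_zero, pow_one, one_mul] at h
          exact h
      · intro x hx
        have hx' : x ∈ Set.range A := hx
        obtain ⟨p, hp⟩ := hx'
        rw [← hp]
        have hσc : σ ∈ Subgroup.closure {σ, τ} :=
          Subgroup.subset_closure (Set.mem_insert _ _)
        have hτc : τ ∈ Subgroup.closure {σ, τ} :=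
          Subgroup.subset_closure (Set.mem_insert_of_mem _ rfl)
        exact mul_mem (pow_mem hσc _) (pow_mem hτc _)
    -- injectivity
    have hAinj : Function.Injective A := by
      rintro ⟨i, j⟩ ⟨i', j'⟩ hEq
      simp only [hA_def] at hEq
      have ha : i.val < n := ZMod.val_lt _
      have ha' : i'.val < n := ZMod.val_lt _
      have hb : j.val < 3 := ZMod.val_lt _
      have hb' : j'.val < 3 := ZMod.val_lt _
      have step : σ ^ (n - i'.val + i.val) * τ ^ (j.val + (3 - j'.val)) = 1 := by
        calc σ ^ (n - i'.val + i.val) * τ ^ (j.val + (3 - j'.val))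
            = σ ^ (n - i'.val) * (σ ^ i.val * τ ^ j.val) * τ ^ (3 - j'.val) := by
              rw [pow_add, pow_add]; simp only [mul_assoc]
          _ = σ ^ (n - i'.val) * (σ ^ i'.val * τ ^ j'.val) * τ ^ (3 - j'.val) := by
              rw [hEq]
          _ = σ ^ (n - i'.val + i'.val) * τ ^ (j'.val + (3 - j'.val)) := by
              rw [pow_add, pow_add]; simp only [mul_assoc]
          _ = 1 := by
              rw [show n - i'.val + i'.val = n by omega,
                show j'.val + (3 - j'.val) = 3 by omega, hσn, hτ3, one_mul]
      rw [hσmod, hτmod] at step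
      obtain ⟨hdvd, hb0⟩ := hL _ _ (Nat.mod_lt _ (by norm_num)) step
      have hm0 : (n - i'.val + i.val) % n = 0 :=
        Nat.eq_zero_of_dvd_of_lt hdvd (Nat.mod_lt _ hnpos) |>.symm ▸ rfl
      have hbeq : j.val = j'.val := by omega
      have hdvd2 : n ∣ (n - i'.val + i.val) := Nat.dvd_of_mod_eq_zero hm0
      have haux : n ∣ (n - i'.val + i.val - n) :=
        Nat.dvd_sub hdvd2 dvd_rfl
      have hle : n ≤ n - i'.val + i.val := Nat.le_of_dvd (by omega) hdvd2
      have hlt2 : n - i'.val + i.val - n < n := by omega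
      have haeq : i.val = i'.val := by
        have := Nat.eq_zero_of_dvd_of_lt haux hlt2
        omega
      have : i = i' := ZMod.val_injective n haeq
      have : j = j' := ZMod.val_injective 3 hbeq
      exact Prod.ext ‹i = i'› ‹j = j'›
    -- conclude
    rw [hclosure]
    have hcard : Nat.card K = Nat.card (ZMod n × ZMod 3) := by
      have : Nat.card K = Nat.card (Set.range A) := rfl
      rw [this, Nat.card_range_of_injective hAinj]
    rw [hcard, Nat.card_prod, Nat.card_zmod, Nat.card_zmod, mul_comm]
end

section
/- For d ≥ 5 with ζ_d a primitive d-th root of unity and ζ_{d-1} a primitive (d−1)-st root of unity, the two projective transformations [ζ_d X, Y, Z] and [X, Y, ζ_{d-1} Z] preserve the curve YZ^{d-1} + X^d + Y^d = 0 and generate a cyclic group of order d(d−1) in PGL(3,ℂ). -/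
open MvPolynomial Matrix

/-- A shear (transvection) as an element of `GL(3, ℂ)`. -/
noncomputable def shearGL (i j : Fin 3) (hij : i ≠ j) : GL (Fin 3) ℂ :=
  have h0 : Matrix.single i j (1:ℂ) * Matrix.single i j 1 = 0 :=
    Matrix.single_mul_single_of_ne _ _ _ _ hij.symm _
  ⟨1 + Matrix.single i j 1, 1 - Matrix.single i j 1,
    by rw [Matrix.add_mul, Matrix.mul_sub, Matrix.mul_sub, Matrix.one_mul, Matrix.one_mul,
        Matrix.mul_one, h0]; abel,
    by rw [Matrix.sub_mul, Matrix.mul_add, Matrix.mul_add, Matrix.one_mul, Matrix.one_mul,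
        Matrix.mul_one, h0]; abel⟩

/-- A diagonal element in the center of `GL(3,ℂ)` has equal diagonal entries. -/
lemma center_diag_eq (v : Fin 3 → ℂ) (u : GL (Fin 3) ℂ)
    (hu : (u : Matrix (Fin 3) (Fin 3) ℂ) = Matrix.diagonal v)
    (h : u ∈ Subgroup.center (GL (Fin 3) ℂ)) (i j : Fin 3) (hij : i ≠ j) : v i = v j := by
  have h1 := Subgroup.mem_center_iff.mp h (shearGL i j hij)
  have h2 : (shearGL i j hij : Matrix (Fin 3) (Fin 3) ℂ) * u = u * shearGL i j hij := by
    rw [← Units.val_mul, ← Units.val_mul, h1]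
  rw [hu] at h2
  have h3 := congrFun (congrFun h2 i) j
  simpa [shearGL, Matrix.add_mul, Matrix.mul_add, Matrix.diagonal_apply_ne _ hij,
    Matrix.mul_apply, Matrix.diagonal, Matrix.single, hij] using h3.symm

lemma isCyclic_zpowers {G : Type*} [Group G] (g : G) : IsCyclic (Subgroup.zpowers g) := by
  refine ⟨⟨⟨g, Subgroup.mem_zpowers g⟩, fun x => ?_⟩⟩
  obtain ⟨k, hk⟩ := Subgroup.mem_zpowers_iff.mp x.2
  exact ⟨k, Subtype.ext (by simp [hk])⟩

/-- For `d ≥ 5`, `ζ_d` a primitive `d`-th and `ζ_{d-1}` a primitive `(d-1)`-st root of unity,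
the transformations `[ζ_d X, Y, Z]` and `[X, Y, ζ_{d-1} Z]` preserve the curve
`YZ^{d-1} + X^d + Y^d = 0` and generate a cyclic group of order `d(d-1)` in `PGL(3,ℂ)`. -/
theorem Fdd1_automorphisms (d : ℕ) (hd : 5 ≤ d) (ζd ζd1 : ℂ)
    (hζd : IsPrimitiveRoot ζd d) (hζd1 : IsPrimitiveRoot ζd1 (d - 1))
    (a b : GL (Fin 3) ℂ)
    (ha : (a : Matrix (Fin 3) (Fin 3) ℂ) = !![ζd, 0, 0; 0, 1, 0; 0, 0, 1])
    (hb : (b : Matrix (Fin 3) (Fin 3) ℂ) = !![1, 0, 0; 0, 1, 0; 0, 0, ζd1]) :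
    (∀ M ∈ ({(a : Matrix (Fin 3) (Fin 3) ℂ), (b : Matrix (Fin 3) (Fin 3) ℂ)} :
        Set (Matrix (Fin 3) (Fin 3) ℂ)),
      ∃ c : ℂ, c ≠ 0 ∧
        actOn M (X 1 * X 2 ^ (d - 1) + X 0 ^ d + X 1 ^ d) =
          MvPolynomial.C c * (X 1 * X 2 ^ (d - 1) + X 0 ^ d + X 1 ^ d)) ∧
      IsCyclic (Subgroup.closure {toPGL3 a, toPGL3 b} : Subgroup PGL3) ∧
      Nat.card (Subgroup.closure {toPGL3 a, toPGL3 b} : Subgroup PGL3) = d * (d - 1) := by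
  have hζd_one : ζd ^ d = 1 := hζd.pow_eq_one
  have hζd1_one : ζd1 ^ (d - 1) = 1 := hζd1.pow_eq_one
  -- diagonal forms
  have ha' : (a : Matrix (Fin 3) (Fin 3) ℂ) = Matrix.diagonal ![ζd, 1, 1] := by
    rw [ha]; ext i j; fin_cases i <;> fin_cases j <;>
      simp [Matrix.diagonal, Matrix.vecHead, Matrix.vecTail]
  have hb' : (b : Matrix (Fin 3) (Fin 3) ℂ) = Matrix.diagonal ![1, 1, ζd1] := by
    rw [hb]; ext i j; fin_cases i <;> fin_cases j <;>
      simp [Matrix.diagonal, Matrix.vecHead, Matrix.vecTail]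
  have hapow : ∀ k : ℕ, ((a ^ k : GL (Fin 3) ℂ) : Matrix (Fin 3) (Fin 3) ℂ)
      = Matrix.diagonal ![ζd ^ k, 1, 1] := by
    intro k
    have hv : (![ζd, 1, 1] : Fin 3 → ℂ) ^ k = ![ζd ^ k, 1, 1] := by
      funext i; fin_cases i <;> simp [Pi.pow_apply]
    rw [Units.val_pow_eq_pow_val, ha', Matrix.diagonal_pow, hv]
  have hbpow : ∀ k : ℕ, ((b ^ k : GL (Fin 3) ℂ) : Matrix (Fin 3) (Fin 3) ℂ)
      = Matrix.diagonal ![1, 1, ζd1 ^ k] := by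
    intro k
    have hv : (![1, 1, ζd1] : Fin 3 → ℂ) ^ k = ![1, 1, ζd1 ^ k] := by
      funext i; fin_cases i <;> simp [Pi.pow_apply]
    rw [Units.val_pow_eq_pow_val, hb', Matrix.diagonal_pow, hv]
  -- order of toPGL3 a is d
  have hAk : ∀ k : ℕ, (toPGL3 a) ^ k = 1 ↔ d ∣ k := by
    intro k
    rw [← map_pow]
    rw [show toPGL3 (a ^ k) = ((a ^ k : GL (Fin 3) ℂ) : PGL3) from rfl,
      QuotientGroup.eq_one_iff]
    constructor
    · intro h
      have := center_diag_eq _ _ (hapow k) h 0 1 (by decide)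
      simp at this
      exact hζd.dvd_of_pow_eq_one _ this
    · intro h
      have : ζd ^ k = 1 := by
        obtain ⟨m, rfl⟩ := h
        rw [pow_mul, hζd_one, one_pow]
      have h1 : a ^ k = 1 := by
        ext1
        rw [hapow k, this, Units.val_one]
        ext i j; fin_cases i <;> fin_cases j <;>
          simp [Matrix.diagonal, Matrix.vecHead, Matrix.vecTail]
      rw [h1]; exact Subgroup.one_mem _
  have hBk : ∀ k : ℕ, (toPGL3 b) ^ k = 1 ↔ (d - 1) ∣ k := by
    intro k
    rw [← map_pow]
    rw [show toPGL3 (b ^ k) = ((b ^ k : GL (Fin 3) ℂ) : PGL3) from rfl,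
      QuotientGroup.eq_one_iff]
    constructor
    · intro h
      have := center_diag_eq _ _ (hbpow k) h 2 1 (by decide)
      simp at this
      exact hζd1.dvd_of_pow_eq_one _ this
    · intro h
      have : ζd1 ^ k = 1 := by
        obtain ⟨m, rfl⟩ := h
        rw [pow_mul, hζd1_one, one_pow]
      have h1 : b ^ k = 1 := by
        ext1
        rw [hbpow k, this, Units.val_one]
        ext i j; fin_cases i <;> fin_cases j <;>
          simp [Matrix.diagonal, Matrix.vecHead, Matrix.vecTail]
      rw [h1]; exact Subgroup.one_mem _
  have ordA : orderOf (toPGL3 a) = d :=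
    Nat.dvd_antisymm (orderOf_dvd_of_pow_eq_one ((hAk d).mpr dvd_rfl))
      ((hAk _).mp (pow_orderOf_eq_one _))
  have ordB : orderOf (toPGL3 b) = d - 1 :=
    Nat.dvd_antisymm (orderOf_dvd_of_pow_eq_one ((hBk _).mpr dvd_rfl))
      ((hBk _).mp (pow_orderOf_eq_one _))
  -- commutation
  have hab : Commute a b := by
    unfold Commute SemiconjBy
    ext1
    rw [Units.val_mul, Units.val_mul, ha', hb', Matrix.diagonal_mul_diagonal,
      Matrix.diagonal_mul_diagonal]
    funext i; fin_cases i <;> simp [mul_comm]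
  have hAB : Commute (toPGL3 a) (toPGL3 b) := hab.map toPGL3
  have co : Nat.Coprime d (d - 1) := by
    refine (Nat.coprime_sub_self_left (by omega)).mp ?_
    have h1 : d - (d - 1) = 1 := by omega
    rw [h1]
    exact Nat.coprime_one_left _
  have co' : Nat.Coprime (orderOf (toPGL3 a)) (orderOf (toPGL3 b)) := by
    rw [ordA, ordB]; exact co
  have ordAB : orderOf (toPGL3 a * toPGL3 b) = d * (d - 1) := by
    rw [hAB.orderOf_mul_eq_mul_orderOf_of_coprime co', ordA, ordB]
  -- closure equals zpowers of the product
  set g : PGL3 := toPGL3 a * toPGL3 b with hg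
  have hA_mem : toPGL3 a ∈ Subgroup.zpowers g := by
    obtain ⟨n, hn1, hn2⟩ := Nat.chineseRemainder co 1 0
    have key : g ^ n = toPGL3 a := by
      rw [hg, hAB.mul_pow]
      have e1 : (toPGL3 a) ^ n = (toPGL3 a) ^ 1 := by
        rw [pow_eq_pow_iff_modEq, ordA]; exact hn1
      have e2 : (toPGL3 b) ^ n = (toPGL3 b) ^ 0 := by
        rw [pow_eq_pow_iff_modEq, ordB]; exact hn2
      rw [e1, e2, pow_one, pow_zero, mul_one]
    exact key ▸ Subgroup.npow_mem_zpowers g n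
  have hB_mem : toPGL3 b ∈ Subgroup.zpowers g := by
    obtain ⟨n, hn1, hn2⟩ := Nat.chineseRemainder co 0 1
    have key : g ^ n = toPGL3 b := by
      rw [hg, hAB.mul_pow]
      have e1 : (toPGL3 a) ^ n = (toPGL3 a) ^ 0 := by
        rw [pow_eq_pow_iff_modEq, ordA]; exact hn1
      have e2 : (toPGL3 b) ^ n = (toPGL3 b) ^ 1 := by
        rw [pow_eq_pow_iff_modEq, ordB]; exact hn2
      rw [e1, e2, pow_one, pow_zero, one_mul]
    exact key ▸ Subgroup.npow_mem_zpowers g n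
  have hclosure : (Subgroup.closure {toPGL3 a, toPGL3 b} : Subgroup PGL3)
      = Subgroup.zpowers g := by
    refine le_antisymm ((Subgroup.closure_le _).mpr ?_) (Subgroup.zpowers_le.mpr ?_)
    · rintro x (rfl | rfl)
      · exact hA_mem
      · exact hB_mem
    · exact Subgroup.mul_mem _ (Subgroup.subset_closure (Set.mem_insert _ _))
        (Subgroup.subset_closure (Set.mem_insert_of_mem _ rfl))
  refine ⟨?_, ?_, ?_⟩
  · rintro M (rfl | rfl)
    · exact ⟨1, one_ne_zero, by
        rw [ha]
        simp [actOn, Fin.sum_univ_three, mul_pow, ← C_pow, hζd_one,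
          Matrix.vecHead, Matrix.vecTail, Function.comp]⟩
    · exact ⟨1, one_ne_zero, by
        rw [hb]
        simp [actOn, Fin.sum_univ_three, mul_pow, ← C_pow, hζd1_one,
          Matrix.vecHead, Matrix.vecTail, Function.comp]⟩
  · rw [hclosure]; exact isCyclic_zpowers g
  · rw [hclosure, Nat.card_zpowers, ordAB]
end

section
/- Let d ≥ 5 and let ξ be a primitive (d²−3d+3)-rd root of unity. Suppose i, j, k are nonnegative integers with i + j + k = d, each at most d−2, and ξ^{(d-2)i − j + 1} = 1. Then there are no such (i,j,k); equivalently, the only solution of (d−2)i − j + 1 ≡ 0 (mod d²−3d+3) with 0 ≤ i,j,k and i+j+k = d has (i,j,k) = (0,1,d−1), which violates the bound k ≤ d−2. -/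
/-- Arithmetic core of the uniqueness of the Klein curve: for `d ≥ 5` and `ξ` a primitive
`(d²-3d+3)`-rd root of unity, there are no nonnegative integers `i, j, k` with
`i + j + k = d`, `i, j, k ≤ d - 2` and `ξ^{(d-2)i - j + 1} = 1`. -/
theorem klein_low_terms (d : ℕ) (hd : 5 ≤ d) (ξ : ℂ)
    (hξ : IsPrimitiveRoot ξ (d ^ 2 - 3 * d + 3))
    (i j k : ℕ) (hsum : i + j + k = d)
    (hi : i ≤ d - 2) (hj : j ≤ d - 2) (hk : k ≤ d - 2)
    (hpow : ξ ^ (((d - 2 : ℕ) : ℤ) * i - j + 1) = 1) :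
    False := by
  have key : ((d ^ 2 - 3 * d + 3 : ℕ) : ℤ) ∣ (((d - 2 : ℕ) : ℤ) * i - j + 1) :=
    (hξ.zpow_eq_one_iff_dvd _).mp hpow
  have hcast1 : ((d - 2 : ℕ) : ℤ) = (d : ℤ) - 2 := by
    have : (2 : ℕ) ≤ d := by omega
    push_cast [Nat.cast_sub this]; ring
  have hcast2 : ((d ^ 2 - 3 * d + 3 : ℕ) : ℤ) = (d : ℤ) ^ 2 - 3 * d + 3 := by
    have h3 : 3 * d ≤ d ^ 2 := by nlinarith
    push_cast [Nat.cast_sub h3]; ring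
  rw [hcast1, hcast2] at key
  have hiZ : (i : ℤ) ≤ (d : ℤ) - 2 := by omega
  have hjZ : (j : ℤ) ≤ (d : ℤ) - 2 := by omega
  have hkZ : (k : ℤ) ≤ (d : ℤ) - 2 := by omega
  have hsZ : (i : ℤ) + j + k = d := by exact_mod_cast hsum
  have hdZ : (5 : ℤ) ≤ d := by exact_mod_cast hd
  have hi0 : (0 : ℤ) ≤ i := Int.ofNat_nonneg i
  have hj0 : (0 : ℤ) ≤ j := Int.ofNat_nonneg j
  have hzero : ((d : ℤ) - 2) * i - j + 1 = 0 := by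
    refine Int.eq_zero_of_abs_lt_dvd key ?_
    rw [abs_lt]
    constructor
    · nlinarith
    · nlinarith
  -- from hzero: j = (d-2)*i + 1; since j ≤ d-2, i must be 0, then k = d-1 > d-2.
  rcases Nat.eq_zero_or_pos i with h0 | h1
  · subst h0; simp at hzero hsZ; omega
  · have h1Z : (1 : ℤ) ≤ i := by exact_mod_cast h1
    nlinarith
end

section
/- Let d = 2m with m ≥ 4 and λ ∈ ℂ with λ ∉ {0, −1, 2, −2}. Then the curve X^{2m} + Y^{2m} + Z^{2m} + λ(X^m Y^m + Y^m Z^m + Z^m X^m) = 0 is smooth, and the group generated by [ζ²X, Y, Z], [X, ζ²Y, Z], [Y,Z,X], [X,Z,Y] (ζ a primitive d-th root of unity) acts on it and has order 6m² = (3/2)d². -/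
set_option maxRecDepth 8000

open MvPolynomial Matrix

namespace FppAux


variable {m : ℕ}

noncomputable def chi (m : ℕ) (ω : ℂ) (a : ZMod m) : ℂ := ω ^ a.val

lemma pow_mod_eq {ω : ℂ} (hω : ω ^ m = 1) (n : ℕ) : ω ^ (n % m) = ω ^ n := by
  conv_rhs => rw [← Nat.div_add_mod n m]
  rw [pow_add, pow_mul, hω, one_pow, one_mul]

lemma chi_add (hm : 0 < m) {ω : ℂ} (hω : ω ^ m = 1) (a b : ZMod m) :
    chi m ω (a + b) = chi m ω a * chi m ω b := by
  haveI : NeZero m := ⟨hm.ne'⟩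
  rw [chi, chi, chi, ZMod.val_add, pow_mod_eq hω, pow_add]

lemma chi_zero (ω : ℂ) : chi m ω 0 = 1 := by
  rw [chi, ZMod.val_zero, pow_zero]

lemma chi_ne_zero {ω : ℂ} (hω : ω ≠ 0) (a : ZMod m) : chi m ω a ≠ 0 := pow_ne_zero _ hω

lemma chi_inj (hm : 0 < m) {ω : ℂ} (hω : IsPrimitiveRoot ω m) {a b : ZMod m}
    (h : chi m ω a = chi m ω b) : a = b := by
  haveI : NeZero m := ⟨hm.ne'⟩
  have hv := hω.pow_inj (ZMod.val_lt a) (ZMod.val_lt b) h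
  calc a = ((a.val : ℕ) : ZMod m) := by rw [ZMod.natCast_val, ZMod.cast_id]
    _ = ((b.val : ℕ) : ZMod m) := by rw [hv]
    _ = b := by rw [ZMod.natCast_val, ZMod.cast_id]

/-- monomial matrix: permutation σ times diagonal of `ω`-powers. -/
noncomputable def Mmat (m : ℕ) (ω : ℂ) (σ : Equiv.Perm (Fin 3)) (v : Fin 3 → ZMod m) :
    Matrix (Fin 3) (Fin 3) ℂ :=
  Matrix.of fun i j => if σ j = i then chi m ω (v j) else 0

lemma Mmat_mul (hm : 0 < m) {ω : ℂ} (hω : ω ^ m = 1) (σ τ : Equiv.Perm (Fin 3))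
    (v w : Fin 3 → ZMod m) :
    Mmat m ω σ v * Mmat m ω τ w = Mmat m ω (σ * τ) (v ∘ τ + w) := by
  ext i k
  rw [Matrix.mul_apply, Finset.sum_eq_single (τ k)]
  · simp only [Mmat, Matrix.of_apply, Equiv.Perm.mul_apply, Pi.add_apply, Function.comp_apply,
      if_pos rfl, if_true]
    by_cases h : σ (τ k) = i
    · simp only [if_pos h, chi_add hm hω]
    · simp [h]
  · intro j _ hj
    simp only [Mmat, Matrix.of_apply]
    rw [if_neg (fun h : τ k = j => hj h.symm), mul_zero]
  · simp

lemma Mmat_one (ω : ℂ) : Mmat m ω 1 0 = 1 := by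
  ext i j
  by_cases h : j = i
  · subst h; simp [Mmat, chi_zero, Matrix.one_apply]
  · simp [Mmat, h, Matrix.one_apply, Ne.symm h]

noncomputable def fGL (hm : 0 < m) {ω : ℂ} (hω : ω ^ m = 1) (σ : Equiv.Perm (Fin 3))
    (v : Fin 3 → ZMod m) : GL (Fin 3) ℂ where
  val := Mmat m ω σ v
  inv := Mmat m ω σ⁻¹ (-(v ∘ ⇑σ⁻¹))
  val_inv := by
    rw [Mmat_mul hm hω, mul_inv_cancel]
    have : (v ∘ ⇑σ⁻¹) + -(v ∘ ⇑σ⁻¹) = 0 := by funext j; simp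
    rw [show v ∘ ⇑σ⁻¹ + -(v ∘ ⇑σ⁻¹) = 0 from this, Mmat_one]
  inv_val := by
    rw [Mmat_mul hm hω, inv_mul_cancel]
    have : (-(v ∘ ⇑σ⁻¹)) ∘ ⇑σ + v = 0 := by funext j; simp
    rw [this, Mmat_one]

lemma fGL_mul (hm : 0 < m) {ω : ℂ} (hω : ω ^ m = 1) (σ τ : Equiv.Perm (Fin 3))
    (v w : Fin 3 → ZMod m) :
    fGL hm hω σ v * fGL hm hω τ w = fGL hm hω (σ * τ) (v ∘ ⇑τ + w) :=
  Units.ext (Mmat_mul hm hω σ τ v w)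

lemma fGL_one (hm : 0 < m) {ω : ℂ} (hω : ω ^ m = 1) : fGL hm hω 1 0 = 1 :=
  Units.ext (Mmat_one ω)

noncomputable def sUnit (c : ℂˣ) : GL (Fin 3) ℂ where
  val := (c : ℂ) • 1
  inv := ((c⁻¹ : ℂˣ) : ℂ) • 1
  val_inv := by rw [Matrix.smul_mul, Matrix.mul_smul, smul_smul, mul_one]; norm_num
  inv_val := by rw [Matrix.smul_mul, Matrix.mul_smul, smul_smul, mul_one]; norm_num

lemma sUnit_center (c : ℂˣ) : sUnit c ∈ Subgroup.center (GL (Fin 3) ℂ) := by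
  refine Subgroup.mem_center_iff.mpr fun g => Units.ext ?_
  show (g : Matrix (Fin 3) (Fin 3) ℂ) * ((c : ℂ) • 1) = ((c : ℂ) • 1) * g
  rw [Matrix.smul_mul, Matrix.mul_smul, one_mul, mul_one]

lemma toPGL3_sUnit (c : ℂˣ) : toPGL3 (sUnit c) = 1 := by
  rw [toPGL3, QuotientGroup.mk'_apply, QuotientGroup.eq_one_iff]
  exact sUnit_center c

lemma fGL_shift (hm : 0 < m) {ω : ℂ} (hω : ω ^ m = 1) (hω0 : ω ≠ 0) (σ : Equiv.Perm (Fin 3))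
    (v : Fin 3 → ZMod m) (c : ZMod m) :
    fGL hm hω σ (v + fun _ => c) =
      fGL hm hω σ v * sUnit (Units.mk0 (chi m ω c) (chi_ne_zero hω0 c)) := by
  refine Units.ext ?_
  show Mmat m ω σ (v + fun _ => c) = Mmat m ω σ v * (chi m ω c • 1)
  rw [Matrix.mul_smul, mul_one]
  ext i j
  simp only [Mmat, Matrix.of_apply, Pi.add_apply, Matrix.smul_apply, smul_eq_mul]
  by_cases h : σ j = i
  · rw [if_pos h, if_pos h, chi_add hm hω, mul_comm]
  · rw [if_neg h, if_neg h, mul_zero]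

lemma toPGL3_fGL_shift (hm : 0 < m) {ω : ℂ} (hω : ω ^ m = 1) (hω0 : ω ≠ 0)
    (σ : Equiv.Perm (Fin 3)) (v : Fin 3 → ZMod m) (c : ZMod m) :
    toPGL3 (fGL hm hω σ (v + fun _ => c)) = toPGL3 (fGL hm hω σ v) := by
  rw [fGL_shift hm hω hω0]
  rw [_root_.map_mul, toPGL3_sUnit, mul_one]

def c3 : Equiv.Perm (Fin 3) := ⟨fun i => ![2, 0, 1] i, fun i => ![1, 2, 0] i, by decide, by decide⟩

lemma Mmat_one_perm (ω : ℂ) (v : Fin 3 → ZMod m) :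
    Mmat m ω 1 v = Matrix.diagonal (fun i => chi m ω (v i)) := by
  ext i j
  by_cases h : j = i
  · subst h; simp [Mmat, Matrix.diagonal_apply]
  · simp [Mmat, Matrix.diagonal_apply, h, Ne.symm h]

lemma Mmat_perm_entry (ω : ℂ) (σ : Equiv.Perm (Fin 3)) (i j : Fin 3) :
    Mmat m ω σ 0 i j = if σ j = i then 1 else 0 := by
  simp [Mmat, chi_zero]

lemma center_scalar (hm : 2 ≤ m) {ω : ℂ} (hω : IsPrimitiveRoot ω m) (z : GL (Fin 3) ℂ)
    (hz : z ∈ Subgroup.center (GL (Fin 3) ℂ)) :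
    ∃ c : ℂ, (z : Matrix (Fin 3) (Fin 3) ℂ) = c • (1 : Matrix (Fin 3) (Fin 3) ℂ) := by
  have hm0 : 0 < m := by omega
  haveI : Fact (1 < m) := ⟨by omega⟩
  have hωm : ω ^ m = 1 := hω.pow_eq_one
  have hω1 : ω ≠ 1 := hω.ne_one (by omega)
  have hsub : ω - 1 ≠ 0 := sub_ne_zero_of_ne hω1
  have hcomm := Subgroup.mem_center_iff.mp hz
  set Z := (z : Matrix (Fin 3) (Fin 3) ℂ) with hZ
  have hchi1 : chi m ω (1 : ZMod m) = ω := by rw [chi, ZMod.val_one, pow_one]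
  -- commute with diag(ω,1,1)
  have h1 := congrArg Units.val (hcomm (fGL hm0 hωm 1 ![1, 0, 0]))
  have h2 := congrArg Units.val (hcomm (fGL hm0 hωm 1 ![0, 1, 0]))
  have h3 := congrArg Units.val (hcomm (fGL hm0 hωm c3 0))
  have key : ∀ v : Fin 3 → ZMod m, (fGL hm0 hωm 1 v * z : GL (Fin 3) ℂ).val
      = Matrix.diagonal (fun i => chi m ω (v i)) * Z := by
    intro v
    show Mmat m ω 1 v * Z = _
    rw [Mmat_one_perm]
  have key' : ∀ v : Fin 3 → ZMod m, (z * fGL hm0 hωm 1 v : GL (Fin 3) ℂ).val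
      = Z * Matrix.diagonal (fun i => chi m ω (v i)) := by
    intro v
    show Z * Mmat m ω 1 v = _
    rw [Mmat_one_perm]
  rw [key, key'] at h1
  rw [key, key'] at h2
  have ent : ∀ i j : Fin 3, chi m ω (![1,0,0] i) * Z i j = Z i j * chi m ω (![1,0,0] j) :=
    fun i j => by
      have := congrFun (congrFun h1 i) j
      rwa [Matrix.diagonal_mul, Matrix.mul_diagonal] at this
  have ent2 : ∀ i j : Fin 3, chi m ω (![0,1,0] i) * Z i j = Z i j * chi m ω (![0,1,0] j) :=
    fun i j => by
      have := congrFun (congrFun h2 i) j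
      rwa [Matrix.diagonal_mul, Matrix.mul_diagonal] at this
  have z01 : Z 0 1 = 0 := by
    have e := ent 0 1; simp [hchi1, chi_zero] at e
    exact (mul_eq_zero.mp (show (ω - 1) * Z 0 1 = 0 from by linear_combination e)).resolve_left hsub
  have z02 : Z 0 2 = 0 := by
    have e := ent 0 2; simp [hchi1, chi_zero] at e
    exact (mul_eq_zero.mp (show (ω - 1) * Z 0 2 = 0 from by linear_combination e)).resolve_left hsub
  have z10 : Z 1 0 = 0 := by
    have e := ent 1 0; simp [hchi1, chi_zero] at e
    exact (mul_eq_zero.mp (show (ω - 1) * Z 1 0 = 0 from by linear_combination -e)).resolve_left hsub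
  have z20 : Z 2 0 = 0 := by
    have e := ent 2 0; simp [hchi1, chi_zero] at e
    exact (mul_eq_zero.mp (show (ω - 1) * Z 2 0 = 0 from by linear_combination -e)).resolve_left hsub
  have z12 : Z 1 2 = 0 := by
    have e := ent2 1 2; simp [hchi1, chi_zero] at e
    exact (mul_eq_zero.mp (show (ω - 1) * Z 1 2 = 0 from by linear_combination e)).resolve_left hsub
  have z21 : Z 2 1 = 0 := by
    have e := ent2 2 1; simp [hchi1, chi_zero] at e
    exact (mul_eq_zero.mp (show (ω - 1) * Z 2 1 = 0 from by linear_combination -e)).resolve_left hsub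
  have h3l : Mmat m ω c3 0 * Z = Z * Mmat m ω c3 0 := h3
  have d1 : Z 1 1 = Z 0 0 := by
    have e := congrFun (congrFun h3l 0) 1
    simp [Matrix.mul_apply, Fin.sum_univ_three, Mmat_perm_entry, c3, z01, z10] at e
    exact e
  have d2 : Z 0 0 = Z 2 2 := by
    have e := congrFun (congrFun h3l 2) 0
    simp [Matrix.mul_apply, Fin.sum_univ_three, Mmat_perm_entry, c3, z20, z02] at e
    exact e
  refine ⟨Z 0 0, ?_⟩
  ext i j
  fin_cases i <;> fin_cases j <;>
    simp [Matrix.smul_apply, Matrix.one_apply, z01, z02, z10, z20, z12, z21, d1, ← d2]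

def sw : Equiv.Perm (Fin 3) := Equiv.swap 1 2

lemma Mmat_g1 (hm : 2 ≤ m) (ω : ℂ) :
    Mmat m ω 1 ![1, 0, 0] = !![ω, 0, 0; 0, 1, 0; 0, 0, 1] := by
  haveI : Fact (1 < m) := ⟨by omega⟩
  have hchi1 : chi m ω (1 : ZMod m) = ω := by rw [chi, ZMod.val_one, pow_one]
  ext i j
  fin_cases i <;> fin_cases j <;> simp [Mmat, chi_zero, hchi1, Matrix.vecHead, Matrix.vecTail]

lemma Mmat_g2 (hm : 2 ≤ m) (ω : ℂ) :
    Mmat m ω 1 ![0, 1, 0] = !![1, 0, 0; 0, ω, 0; 0, 0, 1] := by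
  haveI : Fact (1 < m) := ⟨by omega⟩
  have hchi1 : chi m ω (1 : ZMod m) = ω := by rw [chi, ZMod.val_one, pow_one]
  ext i j
  fin_cases i <;> fin_cases j <;> simp [Mmat, chi_zero, hchi1, Matrix.vecHead, Matrix.vecTail]

lemma Mmat_g3 (ω : ℂ) :
    Mmat m ω c3 0 = !![0, 1, 0; 0, 0, 1; 1, 0, 0] := by
  ext i j
  fin_cases i <;> fin_cases j <;> simp [Mmat, chi_zero, c3, Matrix.vecHead, Matrix.vecTail]

lemma Mmat_g4 (ω : ℂ) :
    Mmat m ω sw 0 = !![1, 0, 0; 0, 0, 1; 0, 1, 0] := by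
  ext i j
  fin_cases i <;> fin_cases j <;> simp [Mmat, chi_zero, sw, Equiv.swap_apply_def, Matrix.vecHead, Matrix.vecTail]

lemma f0_inj (hm : 4 ≤ m) {ω : ℂ} (hω : IsPrimitiveRoot ω m) :
    Function.Injective (fun p : Equiv.Perm (Fin 3) × ZMod m × ZMod m =>
      toPGL3 (fGL (show 0 < m by omega) hω.pow_eq_one p.1 ![p.2.1, p.2.2, 0])) := by
  have hm0 : 0 < m := by omega
  have hω0 : ω ≠ 0 := hω.ne_zero (by omega)
  rintro ⟨σ, a, b⟩ ⟨τ, c, d⟩ h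
  simp only [toPGL3] at h
  obtain ⟨z, hz, hmul⟩ := (QuotientGroup.mk'_eq_mk' (Subgroup.center (GL (Fin 3) ℂ))).mp h
  obtain ⟨e, he⟩ := center_scalar (by omega) hω z hz
  have hmat := congrArg Units.val hmul
  rw [show ((fGL hm0 hω.pow_eq_one σ ![a, b, 0] * z : GL (Fin 3) ℂ) : Matrix (Fin 3) (Fin 3) ℂ)
      = Mmat m ω σ ![a, b, 0] * (z : Matrix (Fin 3) (Fin 3) ℂ) from rfl, he] at hmat
  rw [Matrix.mul_smul, mul_one] at hmat
  have hent : ∀ i j, e • Mmat m ω σ ![a, b, 0] i j = Mmat m ω τ ![c, d, 0] i j :=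
    fun i j => congrFun (congrFun hmat i) j
  have hσ : σ = τ := by
    refine Equiv.ext fun j => ?_
    by_contra hne
    have := hent (τ j) j
    rw [show Mmat m ω τ ![c, d, 0] (τ j) j = chi m ω (![c, d, 0] j) from by
      simp [Mmat]] at this
    rw [show Mmat m ω σ ![a, b, 0] (τ j) j = 0 from by simp [Mmat, hne]] at this
    exact chi_ne_zero hω0 _ (by simpa using this.symm)
  subst hσ
  have hval : ∀ j, e * chi m ω (![a, b, 0] j) = chi m ω (![c, d, 0] j) := by
    intro j
    have := hent (σ j) j
    rwa [show Mmat m ω σ ![a, b, 0] (σ j) j = chi m ω (![a, b, 0] j) from by simp [Mmat],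
      show Mmat m ω σ ![c, d, 0] (σ j) j = chi m ω (![c, d, 0] j) from by simp [Mmat],
      smul_eq_mul] at this
  have he1 : e = 1 := by
    have := hval 2
    simpa [chi_zero] using this
  subst he1
  have hac : a = c := chi_inj hm0 hω (by simpa using hval 0)
  have hbd : b = d := chi_inj hm0 hω (by simpa using hval 1)
  simp [hac, hbd]

lemma part3 (m : ℕ) (hm : 4 ≤ m) {ω : ℂ} (hω : IsPrimitiveRoot ω m)
    (g₁ g₂ g₃ g₄ : GL (Fin 3) ℂ)
    (hg₁ : (g₁ : Matrix (Fin 3) (Fin 3) ℂ) = !![ω, 0, 0; 0, 1, 0; 0, 0, 1])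
    (hg₂ : (g₂ : Matrix (Fin 3) (Fin 3) ℂ) = !![1, 0, 0; 0, ω, 0; 0, 0, 1])
    (hg₃ : (g₃ : Matrix (Fin 3) (Fin 3) ℂ) = !![0, 1, 0; 0, 0, 1; 1, 0, 0])
    (hg₄ : (g₄ : Matrix (Fin 3) (Fin 3) ℂ) = !![1, 0, 0; 0, 0, 1; 0, 1, 0]) :
    Nat.card (Subgroup.closure {toPGL3 g₁, toPGL3 g₂, toPGL3 g₃, toPGL3 g₄} : Subgroup PGL3)
      = 6 * m ^ 2 := by
  have hm0 : 0 < m := by omega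
  have hωm : ω ^ m = 1 := hω.pow_eq_one
  have hω0 : ω ≠ 0 := hω.ne_zero (by omega)
  haveI : NeZero m := ⟨by omega⟩
  set F : Equiv.Perm (Fin 3) → (Fin 3 → ZMod m) → PGL3 :=
    fun σ v => toPGL3 (fGL hm0 hωm σ v) with hF
  have hFmul : ∀ σ τ v w, F σ v * F τ w = F (σ * τ) (v ∘ ⇑τ + w) := by
    intro σ τ v w
    rw [hF]; dsimp only
    rw [← _root_.map_mul, fGL_mul]
  have hFone : F 1 0 = 1 := by rw [hF]; dsimp only; rw [fGL_one, _root_.map_one]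
  have hFshift : ∀ σ v c, F σ (v + fun _ => c) = F σ v := fun σ v c =>
    toPGL3_fGL_shift hm0 hωm hω0 σ v c
  have hnorm : ∀ σ v, F σ v = F σ ![v 0 - v 2, v 1 - v 2, 0] := by
    intro σ v
    conv_lhs => rw [show v = ![v 0 - v 2, v 1 - v 2, 0] + (fun _ => v 2) from by
      funext i; fin_cases i <;> simp]
    rw [hFshift]
  have hg1' : g₁ = fGL hm0 hωm 1 ![1, 0, 0] :=
    Units.ext (by rw [hg₁]; exact (Mmat_g1 (by omega) ω).symm)
  have hg2' : g₂ = fGL hm0 hωm 1 ![0, 1, 0] :=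
    Units.ext (by rw [hg₂]; exact (Mmat_g2 (by omega) ω).symm)
  have hg3' : g₃ = fGL hm0 hωm c3 0 :=
    Units.ext (by rw [hg₃]; exact (Mmat_g3 ω).symm)
  have hg4' : g₄ = fGL hm0 hωm sw 0 :=
    Units.ext (by rw [hg₄]; exact (Mmat_g4 ω).symm)
  have hG1 : toPGL3 g₁ = F 1 ![1, 0, 0] := by rw [hg1']
  have hG2 : toPGL3 g₂ = F 1 ![0, 1, 0] := by rw [hg2']
  have hG3 : toPGL3 g₃ = F c3 0 := by rw [hg3']
  have hG4 : toPGL3 g₄ = F sw 0 := by rw [hg4']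
  set K : Subgroup PGL3 :=
    { carrier := Set.range fun p : Equiv.Perm (Fin 3) × (Fin 3 → ZMod m) => F p.1 p.2
      one_mem' := ⟨(1, 0), hFone⟩
      mul_mem' := by
        rintro x y ⟨p, rfl⟩ ⟨q, rfl⟩
        exact ⟨(p.1 * q.1, p.2 ∘ ⇑q.1 + q.2), (hFmul p.1 q.1 p.2 q.2).symm⟩
      inv_mem' := by
        rintro x ⟨⟨σ, v⟩, rfl⟩
        refine ⟨(σ⁻¹, -(v ∘ ⇑σ⁻¹)), ?_⟩
        dsimp only
        apply eq_inv_of_mul_eq_one_left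
        rw [hFmul, inv_mul_cancel,
          show ((-(v ∘ ⇑σ⁻¹)) ∘ ⇑σ + v : Fin 3 → ZMod m) = 0 from by funext j; simp]
        exact hFone } with hK
  set CL : Subgroup PGL3 :=
    Subgroup.closure {toPGL3 g₁, toPGL3 g₂, toPGL3 g₃, toPGL3 g₄} with hCL
  have hmulp : ∀ σ τ : Equiv.Perm (Fin 3), F σ 0 * F τ 0 = F (σ * τ) 0 := by
    intro σ τ
    rw [hFmul, show ((0 : Fin 3 → ZMod m) ∘ ⇑τ + 0 : Fin 3 → ZMod m) = 0 from by funext j; simp]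
  have hc3 : F c3 0 ∈ CL := hG3 ▸ Subgroup.subset_closure (by simp)
  have hsw : F sw 0 ∈ CL := hG4 ▸ Subgroup.subset_closure (by simp)
  have hper : ∀ σ : Equiv.Perm (Fin 3), F σ 0 ∈ CL := by
    intro σ
    rcases (show σ = 1 ∨ σ = c3 ∨ σ = c3 * c3 ∨ σ = sw ∨ σ = c3 * sw ∨ σ = c3 * c3 * sw from by
      revert σ; decide) with rfl | rfl | rfl | rfl | rfl | rfl
    · rw [hFone]; exact one_mem _
    · exact hc3
    · rw [← hmulp]; exact mul_mem hc3 hc3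
    · exact hsw
    · rw [← hmulp]; exact mul_mem hc3 hsw
    · rw [← hmulp, ← hmulp]; exact mul_mem (mul_mem hc3 hc3) hsw
  have hpow1 : ∀ n : ℕ, (toPGL3 g₁) ^ n = F 1 ![(n : ZMod m), 0, 0] := by
    intro n
    induction n with
    | zero =>
      rw [pow_zero, show ![((0 : ℕ) : ZMod m), 0, 0] = (0 : Fin 3 → ZMod m) from by
        funext i; fin_cases i <;> simp, hFone]
    | succ n ih =>
      rw [pow_succ, ih, hG1, hFmul, one_mul,
        show (![((n : ℕ) : ZMod m), 0, 0] ∘ ⇑(1 : Equiv.Perm (Fin 3)) + ![1, 0, 0] : Fin 3 → ZMod m)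
          = ![((n + 1 : ℕ) : ZMod m), 0, 0] from by funext i; fin_cases i <;> simp]
  have hpow2 : ∀ n : ℕ, (toPGL3 g₂) ^ n = F 1 ![0, (n : ZMod m), 0] := by
    intro n
    induction n with
    | zero =>
      rw [pow_zero, show ![0, ((0 : ℕ) : ZMod m), 0] = (0 : Fin 3 → ZMod m) from by
        funext i; fin_cases i <;> simp, hFone]
    | succ n ih =>
      rw [pow_succ, ih, hG2, hFmul, one_mul,
        show (![0, ((n : ℕ) : ZMod m), 0] ∘ ⇑(1 : Equiv.Perm (Fin 3)) + ![0, 1, 0] : Fin 3 → ZMod m)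
          = ![0, ((n + 1 : ℕ) : ZMod m), 0] from by funext i; fin_cases i <;> simp]
  have hdiagab : ∀ a b : ZMod m, F 1 ![a, b, 0] ∈ CL := by
    intro a b
    rw [show F 1 ![a, b, 0] = F 1 ![a, 0, 0] * F 1 ![0, b, 0] from by
      rw [hFmul, one_mul, show (![a, 0, 0] ∘ ⇑(1 : Equiv.Perm (Fin 3)) + ![0, b, 0] : Fin 3 → ZMod m)
        = ![a, b, 0] from by funext i; fin_cases i <;> simp]]
    have ha : F 1 ![a, 0, 0] ∈ CL := by
      rw [show a = ((a.val : ℕ) : ZMod m) from by rw [ZMod.natCast_val, ZMod.cast_id], ← hpow1]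
      exact pow_mem (Subgroup.subset_closure (by simp)) _
    have hb : F 1 ![0, b, 0] ∈ CL := by
      rw [show b = ((b.val : ℕ) : ZMod m) from by rw [ZMod.natCast_val, ZMod.cast_id], ← hpow2]
      exact pow_mem (Subgroup.subset_closure (by simp)) _
    exact mul_mem ha hb
  have hKCL : CL = K := by
    apply le_antisymm
    · rw [hCL]
      refine (Subgroup.closure_le K).mpr ?_
      rintro x (rfl | rfl | rfl | rfl)
      · exact ⟨(1, ![1, 0, 0]), hG1.symm⟩
      · exact ⟨(1, ![0, 1, 0]), hG2.symm⟩
      · exact ⟨(c3, 0), hG3.symm⟩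
      · exact ⟨(sw, 0), hG4.symm⟩
    · rintro x ⟨⟨σ, v⟩, rfl⟩
      dsimp only
      rw [show F σ v = F σ 0 * F 1 v from by
        rw [hFmul, mul_one, show ((0 : Fin 3 → ZMod m) ∘ ⇑(1 : Equiv.Perm (Fin 3)) + v : Fin 3 → ZMod m) = v from by
          funext j; simp]]
      refine mul_mem (hper σ) ?_
      rw [hnorm 1 v]
      exact hdiagab _ _
  rw [hKCL]
  have hcar : (K : Set PGL3) = Set.range (fun p : Equiv.Perm (Fin 3) × ZMod m × ZMod m =>
      toPGL3 (fGL (show 0 < m by omega) hω.pow_eq_one p.1 ![p.2.1, p.2.2, 0])) := by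
    ext x
    constructor
    · rintro ⟨⟨σ, v⟩, rfl⟩
      exact ⟨(σ, v 0 - v 2, v 1 - v 2), (hnorm σ v).symm⟩
    · rintro ⟨⟨σ, a, b⟩, rfl⟩
      exact ⟨(σ, ![a, b, 0]), rfl⟩
  have hcard : Nat.card K = Nat.card (Equiv.Perm (Fin 3) × ZMod m × ZMod m) := by
    rw [show (Nat.card K : ℕ) = Nat.card (K : Set PGL3) from rfl, hcar,
      Nat.card_range_of_injective (f0_inj hm hω)]
  rw [hcard, Nat.card_prod, Nat.card_prod, Nat.card_zmod, Nat.card_eq_fintype_card]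
  rw [show Fintype.card (Equiv.Perm (Fin 3)) = 6 from by simp [Fintype.card_perm]; rfl]
  ring


lemma core3 {lam A B C : ℂ} (h1 : lam ≠ -1) (h2 : lam ≠ 2) (h3 : lam ≠ -2)
    (hA : A ≠ 0 → 2*A + lam*(B+C) = 0)
    (hB : B ≠ 0 → 2*B + lam*(A+C) = 0)
    (hC : C ≠ 0 → 2*C + lam*(A+B) = 0)
    (hne : ¬(A = 0 ∧ B = 0 ∧ C = 0)) : False := by
  have h4 : (4 : ℂ) - lam^2 ≠ 0 := by
    intro h
    rcases mul_eq_zero.mp (show (2 - lam) * (2 + lam) = 0 from by linear_combination h) with h' | h'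
    · exact h2 (by linear_combination -h')
    · exact h3 (by linear_combination h')
  have h2l : (2 : ℂ) + 2*lam ≠ 0 := fun h => h1 (by linear_combination h/2)
  have h2m : (2 : ℂ) - lam ≠ 0 := fun h => h2 (by linear_combination -h)
  by_cases hA0 : A = 0 <;> by_cases hB0 : B = 0 <;> by_cases hC0 : C = 0
  · exact hne ⟨hA0, hB0, hC0⟩
  · exact hC0 (by have e := hC hC0; subst hA0 hB0; linear_combination e/2)
  · exact hB0 (by have e := hB hB0; subst hA0 hC0; linear_combination e/2)
  · subst hA0
    have eB := hB hB0; have eC := hC hC0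
    have : (4 - lam^2) * B = 0 := by linear_combination 2*eB - lam*eC
    exact hB0 ((mul_eq_zero.mp this).resolve_left h4)
  · exact hA0 (by have e := hA hA0; subst hB0 hC0; linear_combination e/2)
  · subst hB0
    have eA := hA hA0; have eC := hC hC0
    have : (4 - lam^2) * A = 0 := by linear_combination 2*eA - lam*eC
    exact hA0 ((mul_eq_zero.mp this).resolve_left h4)
  · subst hC0
    have eA := hA hA0; have eB := hB hB0
    have : (4 - lam^2) * A = 0 := by linear_combination 2*eA - lam*eB
    exact hA0 ((mul_eq_zero.mp this).resolve_left h4)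
  · have eA := hA hA0; have eB := hB hB0; have eC := hC hC0
    have hsum : (2 + 2*lam) * (A + B + C) = 0 := by linear_combination eA + eB + eC
    have hS : A + B + C = 0 := (mul_eq_zero.mp hsum).resolve_left h2l
    have : (2 - lam) * A = 0 := by linear_combination eA - lam*hS
    exact hA0 ((mul_eq_zero.mp this).resolve_left h2m)

lemma deriv0 (m : ℕ) (hm : 4 ≤ m) (lam : ℂ) (p : Fin 3 → ℂ) :
    MvPolynomial.eval p (MvPolynomial.pderiv 0
      (X 0 ^ (2 * m) + X 1 ^ (2 * m) + X 2 ^ (2 * m) +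
        MvPolynomial.C lam *
          (X 0 ^ m * X 1 ^ m + X 1 ^ m * X 2 ^ m + X 2 ^ m * X 0 ^ m) :
        MvPolynomial (Fin 3) ℂ))
    = (m : ℂ) * (p 0)^(m-1) * (2 * (p 0)^m + lam * ((p 1)^m + (p 2)^m)) := by
  have e1 : 2*m - 1 = (m-1) + m := by omega
  simp only [map_add, pderiv_C_mul, pderiv_mul, pderiv_pow,
    pderiv_X_self, pderiv_C, pderiv_X_of_ne (show (1:Fin 3) ≠ 0 by decide),
    pderiv_X_of_ne (show (2:Fin 3) ≠ 0 by decide)]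
  simp only [mul_zero, zero_mul, mul_one, add_zero, zero_add, map_add, _root_.map_mul, map_pow,
    eval_C, eval_X, eval_mul, eval_add, eval_pow, map_ofNat, Nat.cast_mul,
    _root_.map_natCast, map_zero, Nat.cast_ofNat]
  rw [e1, pow_add]
  ring

lemma deriv1 (m : ℕ) (hm : 4 ≤ m) (lam : ℂ) (p : Fin 3 → ℂ) :
    MvPolynomial.eval p (MvPolynomial.pderiv 1
      (X 0 ^ (2 * m) + X 1 ^ (2 * m) + X 2 ^ (2 * m) +
        MvPolynomial.C lam *
          (X 0 ^ m * X 1 ^ m + X 1 ^ m * X 2 ^ m + X 2 ^ m * X 0 ^ m) :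
        MvPolynomial (Fin 3) ℂ))
    = (m : ℂ) * (p 1)^(m-1) * (2 * (p 1)^m + lam * ((p 0)^m + (p 2)^m)) := by
  have e1 : 2*m - 1 = (m-1) + m := by omega
  simp only [map_add, pderiv_C_mul, pderiv_mul, pderiv_pow,
    pderiv_X_self, pderiv_C, pderiv_X_of_ne (show (0:Fin 3) ≠ 1 by decide),
    pderiv_X_of_ne (show (2:Fin 3) ≠ 1 by decide)]
  simp only [mul_zero, zero_mul, mul_one, add_zero, zero_add, map_add, _root_.map_mul, map_pow,
    eval_C, eval_X, eval_mul, eval_add, eval_pow, map_ofNat, Nat.cast_mul,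
    _root_.map_natCast, map_zero, Nat.cast_ofNat]
  rw [e1, pow_add]
  ring

lemma deriv2 (m : ℕ) (hm : 4 ≤ m) (lam : ℂ) (p : Fin 3 → ℂ) :
    MvPolynomial.eval p (MvPolynomial.pderiv 2
      (X 0 ^ (2 * m) + X 1 ^ (2 * m) + X 2 ^ (2 * m) +
        MvPolynomial.C lam *
          (X 0 ^ m * X 1 ^ m + X 1 ^ m * X 2 ^ m + X 2 ^ m * X 0 ^ m) :
        MvPolynomial (Fin 3) ℂ))
    = (m : ℂ) * (p 2)^(m-1) * (2 * (p 2)^m + lam * ((p 0)^m + (p 1)^m)) := by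
  have e1 : 2*m - 1 = (m-1) + m := by omega
  simp only [map_add, pderiv_C_mul, pderiv_mul, pderiv_pow,
    pderiv_X_self, pderiv_C, pderiv_X_of_ne (show (0:Fin 3) ≠ 2 by decide),
    pderiv_X_of_ne (show (1:Fin 3) ≠ 2 by decide)]
  simp only [mul_zero, zero_mul, mul_one, add_zero, zero_add, map_add, _root_.map_mul, map_pow,
    eval_C, eval_X, eval_mul, eval_add, eval_pow, map_ofNat, Nat.cast_mul,
    _root_.map_natCast, map_zero, Nat.cast_ofNat]
  rw [e1, pow_add]
  ring

lemma smooth_part (m : ℕ) (hm : 4 ≤ m) {lam : ℂ}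
    (h1 : lam ≠ -1) (h2 : lam ≠ 2) (h3 : lam ≠ -2) :
    ∀ p : Fin 3 → ℂ, p ≠ 0 →
      ∃ i : Fin 3,
        MvPolynomial.eval p (MvPolynomial.pderiv i
          (X 0 ^ (2 * m) + X 1 ^ (2 * m) + X 2 ^ (2 * m) +
            MvPolynomial.C lam *
              (X 0 ^ m * X 1 ^ m + X 1 ^ m * X 2 ^ m + X 2 ^ m * X 0 ^ m) :
            MvPolynomial (Fin 3) ℂ)) ≠ 0 := by
  intro p hp
  by_contra hcon
  push_neg at hcon
  have hm0 : (m : ℂ) ≠ 0 := Nat.cast_ne_zero.mpr (by omega)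
  have hmne : m ≠ 0 := by omega
  refine core3 (A := (p 0)^m) (B := (p 1)^m) (C := (p 2)^m) h1 h2 h3 ?_ ?_ ?_ ?_
  · intro hA
    have hp0 : p 0 ≠ 0 := fun h => hA (by rw [h]; exact zero_pow hmne)
    have h := hcon 0
    rw [deriv0 m hm lam p] at h
    exact (mul_eq_zero.mp h).resolve_left (mul_ne_zero hm0 (pow_ne_zero _ hp0))
  · intro hB
    have hp1 : p 1 ≠ 0 := fun h => hB (by rw [h]; exact zero_pow hmne)
    have h := hcon 1
    rw [deriv1 m hm lam p] at h
    exact (mul_eq_zero.mp h).resolve_left (mul_ne_zero hm0 (pow_ne_zero _ hp1))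
  · intro hC
    have hp2 : p 2 ≠ 0 := fun h => hC (by rw [h]; exact zero_pow hmne)
    have h := hcon 2
    rw [deriv2 m hm lam p] at h
    exact (mul_eq_zero.mp h).resolve_left (mul_ne_zero hm0 (pow_ne_zero _ hp2))
  · rintro ⟨hA, hB, hC⟩
    apply hp
    funext i
    fin_cases i
    · exact pow_eq_zero_iff hmne |>.mp hA
    · exact pow_eq_zero_iff hmne |>.mp hB
    · exact pow_eq_zero_iff hmne |>.mp hC

end FppAux

/-- For `d = 2m`, `m ≥ 4` and `λ ∉ {0, -1, 2, -2}`, the curve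
`X^{2m} + Y^{2m} + Z^{2m} + λ(X^m Y^m + Y^m Z^m + Z^m X^m) = 0` is smooth, the group
generated by `[ζ²X, Y, Z]`, `[X, ζ²Y, Z]`, `[Y,Z,X]`, `[X,Z,Y]` (with `ζ` a primitive
`d`-th root of unity) acts on it, and that group has order `6m² = (3/2)d²`. -/
theorem Fpp_curve (m : ℕ) (hm : 4 ≤ m) (d : ℕ) (hd : d = 2 * m) (lam : ℂ)
    (h0 : lam ≠ 0) (h1 : lam ≠ -1) (h2 : lam ≠ 2) (h3 : lam ≠ -2)
    (ζ : ℂ) (hζ : IsPrimitiveRoot ζ d)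
    (g₁ g₂ g₃ g₄ : GL (Fin 3) ℂ)
    (hg₁ : (g₁ : Matrix (Fin 3) (Fin 3) ℂ) = !![ζ ^ 2, 0, 0; 0, 1, 0; 0, 0, 1])
    (hg₂ : (g₂ : Matrix (Fin 3) (Fin 3) ℂ) = !![1, 0, 0; 0, ζ ^ 2, 0; 0, 0, 1])
    (hg₃ : (g₃ : Matrix (Fin 3) (Fin 3) ℂ) = !![0, 1, 0; 0, 0, 1; 1, 0, 0])
    (hg₄ : (g₄ : Matrix (Fin 3) (Fin 3) ℂ) = !![1, 0, 0; 0, 0, 1; 0, 1, 0]) :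
    (∀ p : Fin 3 → ℂ, p ≠ 0 →
      ∃ i : Fin 3,
        MvPolynomial.eval p (MvPolynomial.pderiv i
          (X 0 ^ (2 * m) + X 1 ^ (2 * m) + X 2 ^ (2 * m) +
            MvPolynomial.C lam *
              (X 0 ^ m * X 1 ^ m + X 1 ^ m * X 2 ^ m + X 2 ^ m * X 0 ^ m) :
            MvPolynomial (Fin 3) ℂ)) ≠ 0) ∧
    (∀ g ∈ ({g₁, g₂, g₃, g₄} : Set (GL (Fin 3) ℂ)),
      ∃ c : ℂ, c ≠ 0 ∧
        actOn (g : Matrix (Fin 3) (Fin 3) ℂ)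
            (X 0 ^ (2 * m) + X 1 ^ (2 * m) + X 2 ^ (2 * m) +
              MvPolynomial.C lam *
                (X 0 ^ m * X 1 ^ m + X 1 ^ m * X 2 ^ m + X 2 ^ m * X 0 ^ m)) =
          MvPolynomial.C c *
            (X 0 ^ (2 * m) + X 1 ^ (2 * m) + X 2 ^ (2 * m) +
              MvPolynomial.C lam *
                (X 0 ^ m * X 1 ^ m + X 1 ^ m * X 2 ^ m + X 2 ^ m * X 0 ^ m))) ∧
    Nat.card (Subgroup.closure {toPGL3 g₁, toPGL3 g₂, toPGL3 g₃, toPGL3 g₄} : Subgroup PGL3)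
      = 6 * m ^ 2 := by
  have hz : (ζ^2)^m = 1 := by rw [← pow_mul]; rw [hd] at hζ; exact hζ.pow_eq_one
  have hz2 : (ζ^2)^(2*m) = 1 := by rw [mul_comm, pow_mul, hz, one_pow]
  refine ⟨FppAux.smooth_part m hm h1 h2 h3, ?_, ?_⟩
  · intro g hg
    refine ⟨1, one_ne_zero, ?_⟩
    rcases hg with rfl | rfl | rfl | rfl
    · rw [hg₁]
      simp [actOn, Fin.sum_univ_three, Matrix.vecHead, Matrix.vecTail]
      simp only [mul_pow, ← C_pow, hz, hz2, C_1, one_mul]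
    · rw [hg₂]
      simp [actOn, Fin.sum_univ_three, Matrix.vecHead, Matrix.vecTail]
      simp only [mul_pow, ← C_pow, hz, hz2, C_1, one_mul]
    · rw [hg₃]
      simp [actOn, Fin.sum_univ_three, Matrix.vecHead, Matrix.vecTail]
      ring
    · rw [hg₄]
      simp [actOn, Fin.sum_univ_three, Matrix.vecHead, Matrix.vecTail]
      ring
  · have hω : IsPrimitiveRoot (ζ ^ 2) m :=
      IsPrimitiveRoot.pow (by omega) hζ (by omega)
    exact FppAux.part3 m hm hω g₁ g₂ g₃ g₄ hg₁ hg₂ hg₃ hg₄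
end
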